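/- A topological space is hereditarily separable if and only if it has no uncountable left separated subspace. -/

import Mathlib

open Set

/-- A space is hereditarily separable if every subspace is separable. -/
def HereditarilySeparable (X : Type*) [TopologicalSpace X] : Prop :=
  ∀ s : Set X, TopologicalSpace.SeparableSpace s

/-- `f` restricted to the ordinals below `κ` enumerates a left separated family:
each point `f β` has an open neighborhood avoiding all points `f α` with `α < β`. -/
def IsLeftSeparatedFamily {X : Type*} [TopologicalSpace X]
    (κ : Ordinal) (f : Ordinal → X) : Prop :=
  ∀ β < κ, ∃ U : Set X, IsOpen U ∧ f β ∈ U ∧ ∀ α < β, f α ∉ U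

universe u v

section Aux

variable {X : Type u} [TopologicalSpace X]

open scoped Classical

/-- Transfinite choice of a left separated family inside a non-separable subspace. -/
noncomputable def lsF (s : Set X)
    (H : ∀ A : Set X, A ⊆ s → A.Countable → ∃ x ∈ s, x ∉ closure A) :
    Ordinal.{v} → X :=
  Ordinal.lt_wf.fix fun β ih =>
    if h : ({x | ∃ α, ∃ hα : α < β, ih α hα = x} ∩ s).Countable
    then (H _ inter_subset_right h).choose
    else (H ∅ (empty_subset s) countable_empty).choose

lemma lsF_eq (s : Set X)
    (H : ∀ A : Set X, A ⊆ s → A.Countable → ∃ x ∈ s, x ∉ closure A)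
    (β : Ordinal.{v}) :
    lsF s H β =
      if h : ({x | ∃ α, ∃ hα : α < β, lsF s H α = x} ∩ s).Countable
      then (H _ inter_subset_right h).choose
      else (H ∅ (empty_subset s) countable_empty).choose := by
  conv_lhs => rw [lsF, WellFounded.fix_eq]
  rfl

lemma lsF_mem (s : Set X)
    (H : ∀ A : Set X, A ⊆ s → A.Countable → ∃ x ∈ s, x ∉ closure A)
    (β : Ordinal.{v}) : lsF s H β ∈ s := by
  rw [lsF_eq]
  split
  next hc => exact (H _ inter_subset_right hc).choose_spec.1
  next => exact (H ∅ (empty_subset s) countable_empty).choose_spec.1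

lemma lsF_countable_seg (s : Set X)
    (H : ∀ A : Set X, A ⊆ s → A.Countable → ∃ x ∈ s, x ∉ closure A)
    {β : Ordinal.{v}} (hβ : β < (Cardinal.aleph 1).ord) :
    ({x | ∃ α, ∃ hα : α < β, lsF s H α = x} ∩ s).Countable := by
  have h1 : (Iio β).Countable := by
    rw [← Set.countable_coe_iff, ← Cardinal.mk_le_aleph0_iff, Ordinal.mk_Iio_ordinal,
      ← Cardinal.lift_aleph0.{v+1, v}, Cardinal.lift_le]
    have := Cardinal.lt_ord.1 hβ
    rwa [← Cardinal.succ_aleph0, Order.lt_succ_iff] at this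
  have h2 : {x | ∃ α, ∃ hα : α < β, lsF s H α = x} = lsF s H '' Iio β := by
    ext x
    simp only [Set.mem_image, Set.mem_setOf_eq, Set.mem_Iio]
    exact ⟨fun ⟨α, hα, hx⟩ => ⟨α, hα, hx⟩, fun ⟨α, hα, hx⟩ => ⟨α, hα, hx⟩⟩
  rw [h2]
  exact (h1.image _).mono inter_subset_left

lemma lsF_spec (s : Set X)
    (H : ∀ A : Set X, A ⊆ s → A.Countable → ∃ x ∈ s, x ∉ closure A)
    {β : Ordinal.{v}} (hβ : β < (Cardinal.aleph 1).ord) :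
    lsF s H β ∉ closure ({x | ∃ α, ∃ hα : α < β, lsF s H α = x} ∩ s) := by
  have hc := lsF_countable_seg s H hβ
  rw [lsF_eq s H β, dif_pos hc]
  exact (H _ inter_subset_right hc).choose_spec.2

end Aux

/-- A space is hereditarily separable iff it has no uncountable left separated subspace. -/
theorem hereditarilySeparable_iff_no_uncountable_left_separated
    (X : Type*) [TopologicalSpace X] :
    HereditarilySeparable X ↔
      ¬ ∃ (κ : Ordinal) (f : Ordinal → X),
          Cardinal.aleph0 < κ.card ∧ IsLeftSeparatedFamily κ f := by
  constructor
  · rintro hHS ⟨κ, f, hκ, hls⟩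
    set ω₁ := (Cardinal.aleph 1).ord with hω₁def
    have hω₁κ : ω₁ ≤ κ := by
      rw [Cardinal.ord_le, ← Cardinal.succ_aleph0, Order.succ_le_iff]
      exact hκ
    have hω₁lim : Order.IsSuccLimit ω₁ := Cardinal.isSuccLimit_ord (Cardinal.aleph0_le_aleph 1)
    set s := f '' Iio ω₁ with hsdef
    haveI := hHS s
    obtain ⟨D, hDc, hDd⟩ := TopologicalSpace.exists_countable_dense ↥s
    haveI : Nonempty ↥s := ⟨⟨f 0, ⟨0, hω₁lim.pos, rfl⟩⟩⟩
    obtain ⟨e, hDe⟩ := hDc.exists_eq_range hDd.nonempty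
    set o : ℕ → Ordinal := fun n => (e n).2.choose with hodef
    have ho : ∀ n, o n < ω₁ ∧ f (o n) = (e n : X) := fun n => (e n).2.choose_spec
    have hsup : iSup o < ω₁ := by
      apply Ordinal.iSup_lt_ord_lift
      · rw [Cardinal.isRegular_aleph_one.cof_eq, Cardinal.mk_nat, Cardinal.lift_aleph0]
        exact Cardinal.aleph0_lt_aleph_one
      · exact fun n => (ho n).1
    set β := iSup o + 1 with hβdef
    have hβ : β < ω₁ := by
      rw [hβdef, Ordinal.add_one_eq_succ]
      exact hω₁lim.succ_lt hsup
    obtain ⟨U, hU, hfβ, hav⟩ := hls β (hβ.trans_le hω₁κ)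
    have hfβs : f β ∈ s := ⟨β, hβ, rfl⟩
    obtain ⟨d, hdD, hdU⟩ := hDd.exists_mem_open (hU.preimage continuous_subtype_val)
      ⟨⟨f β, hfβs⟩, hfβ⟩
    rw [hDe] at hdD
    obtain ⟨n, rfl⟩ := hdD
    refine hav (o n) ?_ ?_
    · calc o n ≤ iSup o := Ordinal.le_iSup o n
        _ < β := by rw [hβdef, Ordinal.add_one_eq_succ]; exact Order.lt_succ _
    · rw [(ho n).2]; exact hdU
  · intro h s
    by_contra hsep
    apply h
    have H : ∀ A : Set X, A ⊆ s → A.Countable → ∃ x ∈ s, x ∉ closure A := by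
      intro A hAs hAc
      by_contra hx
      push_neg at hx
      apply hsep
      refine ⟨⟨Subtype.val ⁻¹' A, hAc.preimage Subtype.val_injective, ?_⟩⟩
      intro x
      rw [closure_subtype, Set.image_preimage_eq_inter_range, Subtype.range_coe,
        Set.inter_eq_self_of_subset_left hAs]
      exact hx x x.2
    refine ⟨(Cardinal.aleph 1).ord, lsF s H, ?_, ?_⟩
    · rw [Cardinal.card_ord]; exact Cardinal.aleph0_lt_aleph_one
    · intro β hβ
      refine ⟨(closure ({x | ∃ α, ∃ hα : α < β, lsF s H α = x} ∩ s))ᶜ,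
        isClosed_closure.isOpen_compl, lsF_spec s H hβ, ?_⟩
      intro α hα hmem
      exact hmem (subset_closure ⟨⟨α, hα, rfl⟩, lsF_mem s H α⟩)
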